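/- A constant configuration θ* = (θ*_1,…,θ*_N) ∈ ℝ^N is a stationary solution of the Kuramoto system of identical oscillators (i.e. ∑_{j=1}^N sin(θ*_i − θ*_j) = 0 for every i) if and only if one of the following holds: (1) ∑_{j=1}^N e^{iθ*_j} = 0; or (2) θ* is of type (N−k,k): there exist φ* ∈ ℝ and a subset I ⊆ {1,…,N} with |I| > N/2 such that θ*_i ≡ φ* (mod 2π) for all i ∈ I and θ*_i ≡ φ* + π (mod 2π) for all i ∉ I. -/

import Mathlib

open Real

lemma kuramoto_orderParam_eq (N : ℕ) (θ : Fin N → ℝ) :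
    ∑ j : Fin N, Complex.exp (Complex.I * (θ j : ℂ)) =
      ((∑ j : Fin N, Real.cos (θ j) : ℝ) : ℂ) +
        ((∑ j : Fin N, Real.sin (θ j) : ℝ) : ℂ) * Complex.I := by
  push_cast
  rw [Finset.sum_mul, ← Finset.sum_add_distrib]
  exact Finset.sum_congr rfl fun j _ => by rw [mul_comm, Complex.exp_mul_I]

lemma kuramoto_sinsum_eq (N : ℕ) (θ : Fin N → ℝ) (i : Fin N) :
    ∑ j : Fin N, Real.sin (θ i - θ j) =
      Real.sin (θ i) * (∑ j : Fin N, Real.cos (θ j)) -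
        Real.cos (θ i) * (∑ j : Fin N, Real.sin (θ j)) := by
  rw [Finset.mul_sum, Finset.mul_sum, ← Finset.sum_sub_distrib]
  exact Finset.sum_congr rfl fun j _ => Real.sin_sub _ _

/-- Characterization of stationary solutions of the Kuramoto system of identical
oscillators: `θ*` is stationary (`∑_j sin(θ*_i - θ*_j) = 0` for every `i`) iff either
the order parameter vanishes (`∑_j e^{iθ*_j} = 0`), or `θ*` is of type `(N-k,k)`:
there is `φ*` and a set `I` of indices with `|I| > N/2` such that `θ*_i ≡ φ*` (mod 2π)
on `I` and `θ*_i ≡ φ* + π` (mod 2π) off `I`. -/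
theorem kuramoto_stationary_characterization (N : ℕ) (hN : 0 < N) (θ : Fin N → ℝ) :
    (∀ i, ∑ j : Fin N, Real.sin (θ i - θ j) = 0) ↔
      ((∑ j : Fin N, Complex.exp (Complex.I * (θ j : ℂ)) = 0) ∨
       (∃ (φ : ℝ) (I : Finset (Fin N)), 2 * I.card > N ∧
          (∀ i ∈ I, ∃ m : ℤ, θ i = φ + 2 * π * m) ∧
          (∀ i ∉ I, ∃ m : ℤ, θ i = φ + π + 2 * π * m))) := by
  classical
  constructor
  · intro hstat
    by_cases hZ : (∑ j : Fin N, Complex.exp (Complex.I * (θ j : ℂ))) = 0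
    · exact Or.inl hZ
    right
    set C : ℝ := ∑ j : Fin N, Real.cos (θ j) with hC
    set S : ℝ := ∑ j : Fin N, Real.sin (θ j) with hS
    set z : ℂ := (C : ℂ) + (S : ℂ) * Complex.I with hz
    have hzne : z ≠ 0 := by
      rw [hz, ← kuramoto_orderParam_eq]; exact hZ
    set φ : ℝ := z.arg with hφ
    have hr : 0 < ‖z‖ := by
      simpa using (norm_pos_iff.mpr hzne)
    have hre : z.re = C := by simp [hz]
    have him : z.im = S := by simp [hz]
    have hcos : Real.cos φ = C / ‖z‖ := by
      rw [hφ, Complex.cos_arg hzne, hre]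
    have hsin : Real.sin φ = S / ‖z‖ := by
      rw [hφ, Complex.sin_arg, him]
    -- each θ i is φ + kπ
    have hkey : ∀ i, ∃ k : ℤ, θ i = φ + k * π := by
      intro i
      have h0 : Real.sin (θ i) * C - Real.cos (θ i) * S = 0 := by
        rw [← kuramoto_sinsum_eq]; exact hstat i
      have h1 : Real.sin (θ i - φ) = 0 := by
        rw [Real.sin_sub, hcos, hsin]
        field_simp
        linarith [h0]
      obtain ⟨n, hn⟩ := Real.sin_eq_zero_iff.mp h1
      exact ⟨n, by linarith [hn]⟩
    set Iset : Finset (Fin N) :=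
      Finset.univ.filter (fun i => ∃ m : ℤ, θ i = φ + 2 * π * m) with hIset
    have hIn : ∀ i ∈ Iset, ∃ m : ℤ, θ i = φ + 2 * π * m := by
      intro i hi; simpa [hIset] using hi
    have hOut : ∀ i ∉ Iset, ∃ m : ℤ, θ i = φ + π + 2 * π * m := by
      intro i hi
      obtain ⟨k, hk⟩ := hkey i
      rcases Int.even_or_odd k with ⟨m, hm⟩ | ⟨m, hm⟩
      · exfalso
        apply hi
        simp only [hIset, Finset.mem_filter, Finset.mem_univ, true_and]
        exact ⟨m, by rw [hk, hm]; push_cast; ring⟩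
      · exact ⟨m, by rw [hk, hm]; push_cast; ring⟩
    -- compute the order parameter
    set e : ℂ := Complex.exp ((φ : ℂ) * Complex.I) with he
    have hene : e ≠ 0 := Complex.exp_ne_zero _
    have hsumIn : ∑ i ∈ Iset, Complex.exp (Complex.I * (θ i : ℂ)) = (Iset.card : ℂ) * e := by
      rw [Finset.sum_congr rfl (fun i hi => ?_), Finset.sum_const, nsmul_eq_mul]
      obtain ⟨m, hm⟩ := hIn i hi
      rw [hm, he]
      push_cast
      rw [mul_comm, add_mul, Complex.exp_add]
      have : ((m : ℂ) * (2 * (π : ℂ) * Complex.I)) = (2 * (π:ℂ) * (m:ℂ)) * Complex.I := by ring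
      rw [← this, Complex.exp_int_mul_two_pi_mul_I, mul_one]
    have hsumOut : ∑ i ∈ Finset.univ.filter (fun i => i ∉ Iset),
        Complex.exp (Complex.I * (θ i : ℂ))
        = -(((Finset.univ.filter (fun i => i ∉ Iset)).card : ℂ) * e) := by
      have hterm : ∀ i ∈ Finset.univ.filter (fun i => i ∉ Iset),
          Complex.exp (Complex.I * (θ i : ℂ)) = -e := by
        intro i hi
        obtain ⟨m, hm⟩ := hOut i (Finset.mem_filter.mp hi).2
        rw [hm, he]
        push_cast
        rw [mul_comm, add_mul, add_mul, Complex.exp_add, Complex.exp_add]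
        have h2 : ((m : ℂ) * (2 * (π : ℂ) * Complex.I)) = (2 * (π:ℂ) * (m:ℂ)) * Complex.I := by
          ring
        rw [← h2, Complex.exp_int_mul_two_pi_mul_I, mul_one, Complex.exp_pi_mul_I]
        ring
      rw [Finset.sum_congr rfl hterm, Finset.sum_const, nsmul_eq_mul]
      ring
    have hcards : Iset.card + (Finset.univ.filter (fun i => i ∉ Iset)).card = N := by
      have : (Finset.univ.filter (fun i => i ∉ Iset)) = Isetᶜ := by
        ext x; simp
      rw [this]
      simpa using Finset.card_add_card_compl Iset
    have hne : Iset.card ≠ (Finset.univ.filter (fun i => i ∉ Iset)).card := by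
      intro hcontra
      apply hZ
      rw [← Finset.sum_filter_add_sum_filter_not Finset.univ (fun i => i ∈ Iset)]
      have hfe : Finset.univ.filter (fun i => i ∈ Iset) = Iset := by ext x; simp
      rw [hfe, hsumIn, hsumOut, ← hcontra]
      ring
    -- case split on which side is the majority
    rcases lt_or_gt_of_ne hne with hlt | hgt
    · -- Iset is the majority? No: card Iset < card complement means complement majority
      refine ⟨φ + π, Finset.univ.filter (fun i => i ∉ Iset), ?_, ?_, ?_⟩
      · omega
      · intro i hi
        obtain ⟨m, hm⟩ := hOut i (Finset.mem_filter.mp hi).2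
        exact ⟨m, by rw [hm]⟩
      · intro i hi
        have : i ∈ Iset := by
          by_contra hcon
          exact hi (Finset.mem_filter.mpr ⟨Finset.mem_univ i, hcon⟩)
        obtain ⟨m, hm⟩ := hIn i this
        exact ⟨m - 1, by rw [hm]; push_cast; ring⟩
    · exact ⟨φ, Iset, by omega, hIn, hOut⟩
  · rintro (hZ | ⟨φ, Iset, hcard, hIn, hOut⟩) <;> intro i
    · rw [kuramoto_sinsum_eq]
      have h := kuramoto_orderParam_eq N θ
      rw [hZ] at h
      have h' : ((∑ j : Fin N, Real.cos (θ j) : ℝ) : ℂ) +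
          ((∑ j : Fin N, Real.sin (θ j) : ℝ) : ℂ) * Complex.I = 0 := h.symm
      rw [Complex.ext_iff] at h'
      simp only [Complex.add_re, Complex.ofReal_re, Complex.mul_re, Complex.I_re,
        Complex.I_im, Complex.ofReal_im, Complex.add_im, Complex.mul_im,
        Complex.zero_re, Complex.zero_im] at h'
      obtain ⟨h1, h2⟩ := h'
      have hc : (∑ j : Fin N, Real.cos (θ j)) = 0 := by linarith
      have hs : (∑ j : Fin N, Real.sin (θ j)) = 0 := by linarith
      rw [hc, hs]; ring
    · refine Finset.sum_eq_zero fun j _ => ?_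
      suffices h : ∃ k : ℤ, θ i - θ j = k * π by
        obtain ⟨k, hk⟩ := h
        rw [hk]; exact Real.sin_int_mul_pi k
      by_cases hi : i ∈ Iset <;> by_cases hj : j ∈ Iset
      · obtain ⟨m, hm⟩ := hIn i hi; obtain ⟨m', hm'⟩ := hIn j hj
        exact ⟨2 * (m - m'), by rw [hm, hm']; push_cast; ring⟩
      · obtain ⟨m, hm⟩ := hIn i hi; obtain ⟨m', hm'⟩ := hOut j hj
        exact ⟨2 * (m - m') - 1, by rw [hm, hm']; push_cast; ring⟩
      · obtain ⟨m, hm⟩ := hOut i hi; obtain ⟨m', hm'⟩ := hIn j hj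
        exact ⟨2 * (m - m') + 1, by rw [hm, hm']; push_cast; ring⟩
      · obtain ⟨m, hm⟩ := hOut i hi; obtain ⟨m', hm'⟩ := hOut j hj
        exact ⟨2 * (m - m'), by rw [hm, hm']; push_cast; ring⟩
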